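/- Let A be a Banach algebra, φ ∈ Δ(A), and M ∈ (A⊗̂A)** with a·M = M·a for all a ∈ A and φ̃(π_A**(M)) = 1. Then there exists a bounded net (n_α) in A⊗̂A with ‖n_α‖ ≤ ‖M‖, a·n_α − n_α·a → 0 in norm for each a ∈ A, and φ(π_A(n_α)) → 1. -/

import Mathlib

set_option synthInstance.maxHeartbeats 1000000
set_option maxHeartbeats 1000000

open ContinuousLinearMap Filter Topology MeasureTheory

/-- Data realizing the projective tensor product `B ⊗̂ B` of a Banach-algebra-like space `B`
(with multiplication `mul`) as a Banach `B`-bimodule `X`: `tp a b` is the elementary tensor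
`a ⊗ b`, `lsmul a x = a · x`, `rsmul a x = x · a`, and `pi` is the product morphism `π`. -/
structure PTD (B : Type) [NormedAddCommGroup B] [NormedSpace ℂ B]
    (X : Type) [NormedAddCommGroup X] [NormedSpace ℂ X]
    (mul : B → B → B) where
  tp : B →L[ℂ] B →L[ℂ] X
  lsmul : B →L[ℂ] X →L[ℂ] X
  rsmul : B →L[ℂ] X →L[ℂ] X
  pi : X →L[ℂ] B
  lsmul_tp : ∀ a b c, lsmul a (tp b c) = tp (mul a b) c
  rsmul_tp : ∀ a b c, rsmul a (tp b c) = tp b (mul c a)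
  pi_tp : ∀ a b, pi (tp a b) = mul a b
  norm_tp : ∀ a b, ‖tp a b‖ ≤ ‖a‖ * ‖b‖
  dense_span : Dense (↑(Submodule.span ℂ (Set.range fun p : B × B => tp p.1 p.2)) : Set X)
  lift : ∀ (Y : Type) [NormedAddCommGroup Y] [NormedSpace ℂ Y] [CompleteSpace Y]
      (b : B →L[ℂ] B →L[ℂ] Y), ∃ T : X →L[ℂ] Y, ∀ a c, T (tp a c) = b a c

/-- The double adjoint (bitranspose) `T** : E** → F**` of a continuous linear map `T : E → F`;
explicitly, `dual2 T M g = M (g ∘ T)`. -/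
noncomputable def dual2 {E F : Type} [NormedAddCommGroup E] [NormedSpace ℂ E]
    [NormedAddCommGroup F] [NormedSpace ℂ F] (T : E →L[ℂ] F) :
    ((E →L[ℂ] ℂ) →L[ℂ] ℂ) →L[ℂ] ((F →L[ℂ] ℂ) →L[ℂ] ℂ) :=
  (ContinuousLinearMap.compL ℂ (F →L[ℂ] ℂ) (E →L[ℂ] ℂ) ℂ).flip
    ((ContinuousLinearMap.compL ℂ E F ℂ).flip T)

theorem dual2_apply {E F : Type} [NormedAddCommGroup E] [NormedSpace ℂ E]
    [NormedAddCommGroup F] [NormedSpace ℂ F] (T : E →L[ℂ] F)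
    (M : (E →L[ℂ] ℂ) →L[ℂ] ℂ) (g : F →L[ℂ] ℂ) :
    dual2 T M g = M (g.comp T) := rfl

theorem re_extendTo𝕜' {Y : Type} [NormedAddCommGroup Y] [NormedSpace ℂ Y]
    (g : Y →L[ℝ] ℝ) (x : Y) : (g.extendTo𝕜' x : ℂ).re = g x := by
  rw [← RCLike.re_to_complex]
  exact g.toLinearMap.extendTo𝕜'_apply_re x

theorem key_step
    (A : Type) [NonUnitalNormedRing A] [NormedSpace ℂ A]
    [IsScalarTower ℂ A A] [SMulCommClass ℂ A A] [CompleteSpace A]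
    (φ : A →L[ℂ] ℂ)
    (X : Type) [NormedAddCommGroup X] [NormedSpace ℂ X] [CompleteSpace X]
    (td : PTD A X (fun a b => a * b))
    (M : (X →L[ℂ] ℂ) →L[ℂ] ℂ)
    (hM_central : ∀ a : A, dual2 (td.lsmul a) M = dual2 (td.rsmul a) M)
    (hM_one : dual2 td.pi M φ = 1)
    (F : Finset A) (ε : ℝ) (hε : 0 < ε) :
    ∃ n : X, ‖n‖ ≤ ‖M‖ ∧ (∀ a ∈ F, ‖td.lsmul a n - td.rsmul a n‖ ≤ ε) ∧
      ‖φ (td.pi n) - 1‖ ≤ ε := by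
  classical
  by_contra hcon
  push_neg at hcon
  have hMφ : M (φ.comp td.pi) = 1 := by rw [← dual2_apply]; exact hM_one
  have hMne : M ≠ 0 := by
    intro h; rw [h] at hMφ; simp at hMφ
  have hMpos : (0:ℝ) < ‖M‖ :=
    lt_of_le_of_ne (norm_nonneg M) fun h => hMne ((ContinuousLinearMap.opNorm_zero_iff M).mp h.symm)
  set α := {a // a ∈ F}
  set T : X → ((α → X) × ℂ) :=
    fun n => (fun a => td.lsmul a.1 n - td.rsmul a.1 n, φ (td.pi n) - 1) with hT
  set K : Set ((α → X) × ℂ) := T '' Metric.closedBall 0 ‖M‖ with hK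
  -- every element of K has norm ≥ ε
  have hKnorm : ∀ y ∈ K, ε ≤ ‖y‖ := by
    rintro y ⟨n, hn, rfl⟩
    rw [Metric.mem_closedBall, dist_zero_right] at hn
    by_cases hall : ∀ a ∈ F, ‖td.lsmul a n - td.rsmul a n‖ ≤ ε
    · calc ε ≤ ‖(T n).2‖ := (hcon n hn hall).le
        _ ≤ ‖T n‖ := norm_snd_le _
    · push_neg at hall
      obtain ⟨a, haF, ha⟩ := hall
      calc ε ≤ ‖(T n).1 ⟨a, haF⟩‖ := ha.le
        _ ≤ ‖(T n).1‖ := norm_le_pi_norm _ _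
        _ ≤ ‖T n‖ := norm_fst_le _
  have h0K : (0 : (α → X) × ℂ) ∉ closure K := by
    intro h0
    have : ε ≤ ‖(0 : (α → X) × ℂ)‖ := by
      have hcl : closure K ⊆ {y | ε ≤ ‖y‖} :=
        closure_minimal hKnorm (isClosed_le continuous_const continuous_norm)
      exact hcl h0
    simp at this
    linarith
  have hKconv : Convex ℝ K := by
    rintro y ⟨n₁, hn₁, rfl⟩ z ⟨n₂, hn₂, rfl⟩ s t hs ht hst
    refine ⟨s • n₁ + t • n₂, (convex_closedBall (0:X) ‖M‖) hn₁ hn₂ hs ht hst, ?_⟩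
    have ht1 : t = 1 - s := by linarith
    subst ht1
    have h1 : ∀ (a : A), td.lsmul a (s • n₁ + (1-s) • n₂) - td.rsmul a (s • n₁ + (1-s) • n₂)
        = s • (td.lsmul a n₁ - td.rsmul a n₁) + (1-s) • (td.lsmul a n₂ - td.rsmul a n₂) := by
      intro a
      simp only [map_add, map_smul_of_tower, smul_sub]
      abel
    have h2 : φ (td.pi (s • n₁ + (1-s) • n₂)) - 1
        = s • (φ (td.pi n₁) - 1) + (1-s) • (φ (td.pi n₂) - 1) := by
      simp only [map_add, map_smul_of_tower, smul_sub]
      module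
    refine Prod.ext ?_ ?_
    · funext a
      show td.lsmul a.1 _ - td.rsmul a.1 _ = (s • T n₁ + (1-s) • T n₂).1 a
      simp only [Prod.fst_add, Prod.smul_fst, Pi.add_apply, Pi.smul_apply]
      exact h1 a.1
    · show φ (td.pi _) - 1 = (s • T n₁ + (1-s) • T n₂).2
      simp only [Prod.snd_add, Prod.smul_snd]
      exact h2
  obtain ⟨f, u, hf0, hfK⟩ :=
    geometric_hahn_banach_point_closed hKconv.closure isClosed_closure h0K
  rw [map_zero] at hf0
  let ins : α → (X →L[ℝ] (α → X)) := fun a =>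
    { toLinearMap := LinearMap.single ℝ (fun _ : α => X) a,
      cont := by simpa using continuous_single (A := fun _ : α => X) a }
  let fa : α → (X →L[ℝ] ℝ) := fun a =>
    f.comp ((ContinuousLinearMap.inl ℝ (α → X) ℂ).comp (ins a))
  let h : ℂ →L[ℝ] ℝ := f.comp (ContinuousLinearMap.inr ℝ (α → X) ℂ)
  have hdec : ∀ (x : α → X) (z : ℂ), f (x, z) = (∑ a : α, fa a (x a)) + h z := by
    intro x z
    have hx : (x, z) = ((x, (0:ℂ)) + ((0 : α → X), z)) := by simp
    rw [hx, map_add]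
    congr 1
    have hsum : ((x, (0:ℂ)) : (α → X) × ℂ)
        = ∑ a : α, ((Pi.single a (x a) : α → X), (0:ℂ)) := by
      refine Prod.ext ?_ ?_
      · rw [Prod.fst_sum]
        exact (Finset.univ_sum_single x).symm
      · rw [Prod.snd_sum]
        simp
    rw [hsum, map_sum]
    rfl
  let ga : α → (X →L[ℂ] ℂ) := fun a => (fa a).extendTo𝕜'
  let gh : ℂ →L[ℂ] ℂ := h.extendTo𝕜'
  set μ : ℂ := gh 1 with hμ
  have hgh : ∀ z : ℂ, gh z = z * μ := by
    intro z
    have hz : gh z = gh (z • (1:ℂ)) := by rw [smul_eq_mul, mul_one]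
    rw [hz, _root_.map_smul, smul_eq_mul, hμ]
  set U : X →L[ℂ] ℂ :=
    (∑ a : α, (ga a).comp (td.lsmul a.1 - td.rsmul a.1)) + μ • (φ.comp td.pi) with hU
  have hMU : M U = μ := by
    rw [hU, map_add, map_sum, _root_.map_smul]
    have hz : ∀ a : α, M ((ga a).comp (td.lsmul a.1 - td.rsmul a.1)) = 0 := by
      intro a
      rw [ContinuousLinearMap.comp_sub, map_sub, ← dual2_apply, ← dual2_apply, hM_central]
      exact sub_self _
    rw [Finset.sum_congr rfl fun a _ => hz a, Finset.sum_const_zero, zero_add, hMφ,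
      smul_eq_mul, mul_one]
  have hreU : ∀ n : X,
      (U n).re = (∑ a : α, fa a (td.lsmul a.1 n - td.rsmul a.1 n)) + h (φ (td.pi n)) := by
    intro n
    rw [hU]
    simp only [ContinuousLinearMap.add_apply, ContinuousLinearMap.sum_apply,
      ContinuousLinearMap.comp_apply, ContinuousLinearMap.smul_apply,
      ContinuousLinearMap.sub_apply]
    rw [Complex.add_re, Complex.re_sum]
    congr 1
    · exact Finset.sum_congr rfl fun a _ => re_extendTo𝕜' (fa a) _
    · rw [smul_eq_mul, mul_comm, ← hgh]
      exact re_extendTo𝕜' h _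
  have hh1 : h 1 = μ.re := (re_extendTo𝕜' h 1).symm
  have hmain : ∀ n : X, ‖n‖ ≤ ‖M‖ → u + μ.re < (U n).re := by
    intro n hn
    have hTn : T n ∈ K := ⟨n, by simpa [Metric.mem_closedBall, dist_zero_right] using hn, rfl⟩
    have hlt := hfK _ (subset_closure hTn)
    have hfTn : f (T n)
        = (∑ a : α, fa a (td.lsmul a.1 n - td.rsmul a.1 n)) + h (φ (td.pi n) - 1) :=
      hdec _ _
    rw [hfTn, map_sub, hh1] at hlt
    rw [hreU n]
    linarith
  have hneg : 0 < -u - μ.re := by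
    have h0 := hmain 0 (by simpa using hMpos.le)
    rw [map_zero] at h0
    simp only [Complex.zero_re] at h0
    linarith
  have hball : ∀ n : X, ‖n‖ ≤ ‖M‖ → ‖U n‖ ≤ -u - μ.re := by
    intro n hn
    rcases eq_or_ne (U n) 0 with h0 | h0
    · rw [h0, norm_zero]; exact hneg.le
    · have hne : (‖U n‖ : ℂ) ≠ 0 := Complex.ofReal_ne_zero.mpr (norm_ne_zero_iff.mpr h0)
      set c : ℂ := -(starRingEnd ℂ (U n)) / ‖U n‖ with hc
      have hcn : ‖c‖ = 1 := by
        rw [hc, norm_div, norm_neg, RCLike.norm_conj, Complex.norm_real,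
          Real.norm_eq_abs, abs_of_nonneg (norm_nonneg _)]
        exact div_self (norm_ne_zero_iff.mpr h0)
      have hkey : (starRingEnd ℂ) (U n) * U n = (‖U n‖ : ℂ) * ‖U n‖ := by
        rw [mul_comm, Complex.mul_conj]
        norm_cast
        rw [Complex.normSq_eq_norm_sq, sq]
      have hUcn : U (c • n) = -(‖U n‖ : ℂ) := by
        rw [_root_.map_smul, smul_eq_mul, hc, div_mul_eq_mul_div, neg_mul, hkey, neg_div,
          mul_div_assoc, div_self hne, mul_one]
      have hlt := hmain (c • n) (by rw [norm_smul, hcn, one_mul]; exact hn)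
      rw [hUcn] at hlt
      simp only [Complex.neg_re, Complex.ofReal_re] at hlt
      linarith
  have hUnorm : ‖U‖ ≤ (-u - μ.re) / ‖M‖ := by
    refine U.opNorm_le_bound (by positivity) fun x => ?_
    rcases eq_or_ne x 0 with rfl | hx
    · simp
    · have hxpos : 0 < ‖x‖ := norm_pos_iff.mpr hx
      set r : ℝ := ‖M‖ / ‖x‖ with hr
      have hrpos : 0 < r := div_pos hMpos hxpos
      have hrx : r * ‖x‖ = ‖M‖ := div_mul_cancel₀ _ hxpos.ne'
      have hb := hball (r • x) (by
        rw [norm_smul, Real.norm_eq_abs, abs_of_pos hrpos, hrx])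
      rw [map_smul_of_tower, norm_smul, Real.norm_eq_abs, abs_of_pos hrpos] at hb
      rw [div_mul_eq_mul_div, le_div_iff₀ hMpos]
      calc ‖U x‖ * ‖M‖ = (r * ‖U x‖) * ‖x‖ := by rw [← hrx]; ring
        _ ≤ (-u - μ.re) * ‖x‖ := mul_le_mul_of_nonneg_right hb hxpos.le
  have hfin : ‖μ‖ ≤ -u - μ.re := by
    calc ‖μ‖ = ‖M U‖ := by rw [hMU]
      _ ≤ ‖M‖ * ‖U‖ := M.le_opNorm U
      _ ≤ ‖M‖ * ((-u - μ.re) / ‖M‖) := mul_le_mul_of_nonneg_left hUnorm hMpos.le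
      _ = -u - μ.re := by field_simp
  have habs : -‖μ‖ ≤ μ.re := by
    have h1 := Complex.abs_re_le_norm μ
    have h2 := neg_abs_le μ.re
    linarith
  linarith


/-- If `M ∈ (A ⊗̂ A)**` satisfies `a · M = M · a` for all `a ∈ A` and `φ̃(π**(M)) = 1`, then
there is a net `(n_α)` in `A ⊗̂ A` with `‖n_α‖ ≤ ‖M‖`, `a · n_α − n_α · a → 0` in norm for
each `a ∈ A`, and `φ(π(n_α)) → 1`. -/
theorem exists_bounded_approx_central_net
    (A : Type) [NonUnitalNormedRing A] [NormedSpace ℂ A]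
    [IsScalarTower ℂ A A] [SMulCommClass ℂ A A] [CompleteSpace A]
    (φ : A →L[ℂ] ℂ) (hφmul : ∀ a b : A, φ (a * b) = φ a * φ b) (hφne : φ ≠ 0)
    (X : Type) [NormedAddCommGroup X] [NormedSpace ℂ X] [CompleteSpace X]
    (td : PTD A X (fun a b => a * b))
    (M : (X →L[ℂ] ℂ) →L[ℂ] ℂ)
    (hM_central : ∀ a : A, dual2 (td.lsmul a) M = dual2 (td.rsmul a) M)
    (hM_one : dual2 td.pi M φ = 1) :
    ∃ (ι : Type) (l : Filter ι), l.NeBot ∧ ∃ n : ι → X,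
      (∀ i, ‖n i‖ ≤ ‖M‖) ∧
      (∀ a : A, Tendsto (fun i => td.lsmul a (n i) - td.rsmul a (n i)) l (𝓝 0)) ∧
      Tendsto (fun i => φ (td.pi (n i))) l (𝓝 1) := by
  classical
  have key := fun (i : Finset A × ℕ) =>
    key_step A φ X td M hM_central hM_one i.1 (1/((i.2:ℝ)+1)) (by positivity)
  choose n hn1 hn2 hn3 using key
  have hg : Tendsto (fun i : Finset A × ℕ => 1/((i.2:ℝ)+1)) atTop (𝓝 0) := by
    have h1 : Tendsto (Prod.snd : Finset A × ℕ → ℕ) atTop atTop := by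
      rw [← prod_atTop_atTop_eq]; exact tendsto_snd
    exact tendsto_one_div_add_atTop_nhds_zero_nat.comp h1
  refine ⟨Finset A × ℕ, atTop, atTop_neBot, n, hn1, ?_, ?_⟩
  · intro a
    refine squeeze_zero_norm' ?_ hg
    filter_upwards [eventually_ge_atTop ((⟨{a}, 0⟩ : Finset A × ℕ))] with i hi
    exact hn2 i a (Finset.singleton_subset_iff.mp hi.1)
  · rw [tendsto_iff_norm_sub_tendsto_zero]
    exact squeeze_zero (fun i => norm_nonneg _) (fun i => hn3 i) hg
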